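/- For any point x̄ ∈ ℝ², any radius r > 0, and any finite family of points x₁,…,xₙ ∈ ℝ², the length of the part of the boundary of the union of the balls B_r(xᵢ) lying inside B_r(x̄) is at most the length of the part of ∂B_r(x̄) covered by the union: 𝓗¹(B_r(x̄) ∩ ∂⋃ᵢ B_r(xᵢ)) ≤ 𝓗¹(∂B_r(x̄) ∩ ⋃ᵢ B_r(xᵢ)) ≤ 2πr. -/

import Mathlib

open Metric MeasureTheory Set Filter
open scoped ENNReal Topology Real RealInnerProductSpace
noncomputable section
local notation "E2" => EuclideanSpace ℝ (Fin 2)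

/-- Reflection of the vector `d` across the hyperplane orthogonal to `v`. -/
def Rv (v d : E2) : E2 := d - (2 * ⟪d, v⟫ / ⟪v, v⟫) • v

lemma Rv_sub (v d e : E2) : Rv v (d - e) = Rv v d - Rv v e := by
  simp only [Rv, inner_sub_left, sub_div, mul_comm, mul_sub, sub_smul]
  abel

lemma Rv_add (v d e : E2) : Rv v (d + e) = Rv v d + Rv v e := by
  simp only [Rv, inner_add_left, add_div, mul_add, add_smul]
  abel

lemma inner_Rv_v (v d : E2) (hv : v ≠ 0) : ⟪Rv v d, v⟫ = - ⟪d, v⟫ := by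
  have hvv : ⟪v, v⟫ ≠ 0 := inner_self_ne_zero.mpr hv
  simp only [Rv, inner_sub_left, real_inner_smul_left]
  set s := ⟪d, v⟫ with hs
  set V := ⟪v, v⟫ with hV
  field_simp
  ring

lemma Rv_inner_self (v d : E2) : ⟪Rv v d, Rv v d⟫ = ⟪d, d⟫ := by
  rcases eq_or_ne v 0 with rfl | hv
  · simp [Rv]
  · have hvv : ⟪v, v⟫ ≠ 0 := inner_self_ne_zero.mpr hv
    simp only [Rv, inner_sub_left, inner_sub_right, real_inner_smul_left,
      real_inner_smul_right]
    rw [real_inner_comm v d]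
    set s := ⟪d, v⟫ with hs
    set V := ⟪v, v⟫ with hV
    set D := ⟪d, d⟫ with hD
    field_simp
    ring

lemma Rv_self (v : E2) : Rv v v = -v := by
  rcases eq_or_ne v 0 with rfl | hv
  · simp [Rv]
  · have hvv : ⟪v, v⟫ ≠ 0 := inner_self_ne_zero.mpr hv
    have h2 : (2 * ⟪v, v⟫ / ⟪v, v⟫) = 2 := by rw [mul_div_assoc, div_self hvv, mul_one]
    simp only [Rv, h2]
    rw [two_smul]
    abel

lemma Rv_invol (v d : E2) : Rv v (Rv v d) = d := by
  rcases eq_or_ne v 0 with rfl | hv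
  · simp [Rv]
  · have hvv : ⟪v, v⟫ ≠ 0 := inner_self_ne_zero.mpr hv
    have h1 : ⟪Rv v d, v⟫ = - ⟪d, v⟫ := inner_Rv_v v d hv
    rw [Rv, h1, Rv]
    rw [show (2 * -⟪d, v⟫ / ⟪v, v⟫) = -(2 * ⟪d, v⟫ / ⟪v, v⟫) by ring]
    rw [neg_smul]
    abel

lemma Rv_norm (v d : E2) : ‖Rv v d‖ = ‖d‖ := by
  have h := Rv_inner_self v d
  rw [real_inner_self_eq_norm_mul_norm, real_inner_self_eq_norm_mul_norm] at h
  have := congrArg Real.sqrt h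
  rwa [Real.sqrt_mul_self (norm_nonneg _), Real.sqrt_mul_self (norm_nonneg _)] at this
/-- Reflection of the plane across the perpendicular bisector of `[xb, c]`
(identity when `c = xb`). -/
def tau (xb c p : E2) : E2 := c + Rv (c - xb) (p - xb)

lemma tau_dist (xb c p q : E2) : dist (tau xb c p) (tau xb c q) = dist p q := by
  rw [dist_eq_norm, dist_eq_norm]
  have : tau xb c p - tau xb c q = Rv (c - xb) (p - q) := by
    have h : tau xb c p - tau xb c q = Rv (c - xb) (p - xb) - Rv (c - xb) (q - xb) := by
      simp only [tau]; abel
    rw [h, ← Rv_sub, show (p - xb) - (q - xb) = p - q by abel]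
  rw [this, Rv_norm]


lemma tau_isometry (xb c : E2) : Isometry (tau xb c) :=
  Isometry.of_dist_eq fun p q => tau_dist xb c p q

lemma tau_base (xb c : E2) : tau xb c xb = c := by
  simp [tau, Rv]

lemma tau_center (xb c : E2) : tau xb c c = xb := by
  simp only [tau, Rv_self]
  abel

lemma tau_invol (xb c p : E2) : tau xb c (tau xb c p) = p := by
  simp only [tau]
  rw [show c + Rv (c - xb) (p - xb) - xb = (c - xb) + Rv (c - xb) (p - xb) by abel,
    Rv_add, Rv_self, Rv_invol]
  abel

lemma tau_cont (xb c : E2) : Continuous (tau xb c) := (tau_isometry xb c).continuous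

lemma tau_image_eq_preimage (xb c : E2) (s : Set E2) :
    tau xb c '' s = tau xb c ⁻¹' s :=
  congrFun (Set.image_eq_preimage_of_inverse (tau_invol xb c) (tau_invol xb c)) s
lemma inner_lt_of_norm_lt {W a : E2} (h : ‖W - a‖ < ‖W‖) : ⟪a, a⟫ < 2 * ⟪W, a⟫ := by
  have hsq : ‖W - a‖ * ‖W - a‖ < ‖W‖ * ‖W‖ :=
    mul_self_lt_mul_self (norm_nonneg _) h
  rw [← real_inner_self_eq_norm_mul_norm, ← real_inner_self_eq_norm_mul_norm] at hsq
  simp only [inner_sub_left, inner_sub_right] at hsq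
  have hc : ⟪a, W⟫ = ⟪W, a⟫ := real_inner_comm W a
  linarith

lemma inner_ge_of_norm_ge {W p : E2} (h : ‖W‖ ≤ ‖W - p‖) : 2 * ⟪W, p⟫ ≤ ⟪p, p⟫ := by
  have hsq : ‖W‖ * ‖W‖ ≤ ‖W - p‖ * ‖W - p‖ :=
    mul_self_le_mul_self (norm_nonneg _) h
  rw [← real_inner_self_eq_norm_mul_norm, ← real_inner_self_eq_norm_mul_norm] at hsq
  simp only [inner_sub_left, inner_sub_right] at hsq
  have hc : ⟪p, W⟫ = ⟪W, p⟫ := real_inner_comm W p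
  linarith

/-- Pure scalar part of the disjointness argument. -/
lemma scalar_key {A B t Wa Wb na nb : ℝ} (hA : 0 < A) (hB : 0 < B)
    (hα : A < 2 * Wa) (hβ : B < 2 * Wb)
    (P1 : 2 * (A * Wa + (A * Wb - 2 * t * Wa)) ≤ A * (A + B - 2 * t))
    (P2 : 2 * (B * Wb + (B * Wa - 2 * t * Wb)) ≤ B * (A + B - 2 * t))
    (hCS : t ≤ na * nb) (hAn : A = na * na) (hBn : B = nb * nb) :
    t = na * nb ∧ na = nb := by
  have hαpos : 0 < 2 * Wa - A := by linarith
  have hβpos : 0 < 2 * Wb - B := by linarith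
  have s1 : A * (2 * Wb - B) ≤ (2 * Wa - A) * (2 * t - A) := by linarith [P1]
  have s2 : B * (2 * Wa - A) ≤ (2 * Wb - B) * (2 * t - B) := by linarith [P2]
  have h2tA : 0 < 2 * t - A := by
    by_contra hcon
    push_neg at hcon
    have h0 : (2 * Wa - A) * (2 * t - A) ≤ 0 :=
      mul_nonpos_of_nonneg_of_nonpos hαpos.le hcon
    linarith [mul_pos hA hβpos]
  have h2tB : 0 < 2 * t - B := by
    by_contra hcon
    push_neg at hcon
    have h0 : (2 * Wb - B) * (2 * t - B) ≤ 0 :=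
      mul_nonpos_of_nonneg_of_nonpos hβpos.le hcon
    linarith [mul_pos hB hαpos]
  have prod : (A * (2 * Wb - B)) * (B * (2 * Wa - A))
      ≤ ((2 * Wa - A) * (2 * t - A)) * ((2 * Wb - B) * (2 * t - B)) :=
    mul_le_mul s1 s2 (mul_nonneg hB.le hαpos.le) (mul_nonneg hαpos.le h2tA.le)
  have hABle : A * B ≤ (2 * t - A) * (2 * t - B) := by
    have hm : 0 < (2 * Wa - A) * (2 * Wb - B) := mul_pos hαpos hβpos
    have prod' : ((2 * Wa - A) * (2 * Wb - B)) * (A * B)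
        ≤ ((2 * Wa - A) * (2 * Wb - B)) * ((2 * t - A) * (2 * t - B)) := by linarith [prod]
    exact le_of_mul_le_mul_left prod' hm
  have ht_pos : 0 < t := by linarith
  have h2t : A + B ≤ 2 * t := by
    by_contra hcon
    push_neg at hcon
    have hneg : 2 * t * (2 * t - A - B) < 0 :=
      mul_neg_of_pos_of_neg (by linarith) (by linarith)
    linarith [hABle, hneg]
  have hsum : na * na + nb * nb ≤ 2 * t := by rw [← hAn, ← hBn]; exact h2t
  have h0 : (na - nb) * (na - nb) ≤ 0 := by linarith [hsum, hCS]
  have hnn : na = nb := by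
    have := mul_self_eq_zero.mp (le_antisymm h0 (mul_self_nonneg _))
    linarith
  have hna2 : na * na = na * nb := by rw [hnn]
  have hnb2 : nb * nb = na * nb := by rw [hnn]
  have htge : na * nb ≤ t := by linarith [hsum, hna2, hnb2]
  exact ⟨le_antisymm hCS htge, hnn⟩

/-- The key disjointness fact: a point of the sphere around `xbar` cannot be in
the reflected images for two distinct centers. -/
lemma key_geom (xbar c c' w : E2) (r : ℝ) (hcc' : c ≠ c')
    (hw : dist w xbar = r) (h1 : dist w c < r) (h2 : dist w c' < r)
    (h3 : r ≤ dist w (tau xbar c c')) (h4 : r ≤ dist w (tau xbar c' c)) : False := by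
  set a : E2 := c - xbar with hadef
  set b : E2 := c' - xbar with hbdef
  set W : E2 := w - xbar with hWdef
  have hWnorm : ‖W‖ = r := by rw [hWdef, ← dist_eq_norm]; exact hw
  have hwc : ‖W - a‖ < ‖W‖ := by
    rw [hWdef, hadef, show w - xbar - (c - xbar) = w - c by abel, ← dist_eq_norm, hWnorm]
    exact h1
  have hwc' : ‖W - b‖ < ‖W‖ := by
    rw [hWdef, hbdef, show w - xbar - (c' - xbar) = w - c' by abel, ← dist_eq_norm, hWnorm]
    exact h2
  have hα := inner_lt_of_norm_lt hwc
  have hβ := inner_lt_of_norm_lt hwc'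
  have hane : a ≠ 0 := by
    intro h0
    rw [hadef, sub_eq_zero] at h0
    rw [h0, hw] at h1; exact lt_irrefl _ h1
  have hbne : b ≠ 0 := by
    intro h0
    rw [hbdef, sub_eq_zero] at h0
    rw [h0, hw] at h2; exact lt_irrefl _ h2
  have hA : (0:ℝ) < ⟪a, a⟫ :=
    lt_of_le_of_ne real_inner_self_nonneg (Ne.symm (inner_self_ne_zero.mpr hane))
  have hB : (0:ℝ) < ⟪b, b⟫ :=
    lt_of_le_of_ne real_inner_self_nonneg (Ne.symm (inner_self_ne_zero.mpr hbne))
  have hcomm : ⟪b, a⟫ = ⟪a, b⟫ := real_inner_comm a b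
  -- the two "outside" conditions, written with the reflected centers
  have h3' : 2 * ⟪W, a + Rv a b⟫ ≤ ⟪a + Rv a b, a + Rv a b⟫ := by
    apply inner_ge_of_norm_ge
    rw [hWnorm]
    have hvec : W - (a + Rv a b) = w - tau xbar c c' := by
      simp only [hWdef, hadef, hbdef, tau]
      abel
    rw [hvec, ← dist_eq_norm]
    exact h3
  have h4' : 2 * ⟪W, b + Rv b a⟫ ≤ ⟪b + Rv b a, b + Rv b a⟫ := by
    apply inner_ge_of_norm_ge
    rw [hWnorm]
    have hvec : W - (b + Rv b a) = w - tau xbar c' c := by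
      simp only [hWdef, hadef, hbdef, tau]
      abel
    rw [hvec, ← dist_eq_norm]
    exact h4
  -- scalar expansions
  have hkA : 2 * ⟪b, a⟫ / ⟪a, a⟫ * ⟪a, a⟫ = 2 * ⟪b, a⟫ := div_mul_cancel₀ _ (ne_of_gt hA)
  have hkB : 2 * ⟪a, b⟫ / ⟪b, b⟫ * ⟪b, b⟫ = 2 * ⟪a, b⟫ := div_mul_cancel₀ _ (ne_of_gt hB)
  have haRb : ⟪a, Rv a b⟫ = ⟪a, b⟫ - 2 * ⟪b, a⟫ / ⟪a, a⟫ * ⟪a, a⟫ := by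
    simp only [Rv, inner_sub_right, real_inner_smul_right]
  have hbRa : ⟪b, Rv b a⟫ = ⟪b, a⟫ - 2 * ⟪a, b⟫ / ⟪b, b⟫ * ⟪b, b⟫ := by
    simp only [Rv, inner_sub_right, real_inner_smul_right]
  have hWRb : ⟪W, Rv a b⟫ = ⟪W, b⟫ - 2 * ⟪b, a⟫ / ⟪a, a⟫ * ⟪W, a⟫ := by
    simp only [Rv, inner_sub_right, real_inner_smul_right]
  have hWRa : ⟪W, Rv b a⟫ = ⟪W, a⟫ - 2 * ⟪a, b⟫ / ⟪b, b⟫ * ⟪W, b⟫ := by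
    simp only [Rv, inner_sub_right, real_inner_smul_right]
  have hRbRb : ⟪Rv a b, Rv a b⟫ = ⟪b, b⟫ := Rv_inner_self a b
  have hRaRa : ⟪Rv b a, Rv b a⟫ = ⟪a, a⟫ := Rv_inner_self b a
  have hcRb : ⟪Rv a b, a⟫ = ⟪a, Rv a b⟫ := real_inner_comm a (Rv a b)
  have hcRa : ⟪Rv b a, b⟫ = ⟪b, Rv b a⟫ := real_inner_comm b (Rv b a)
  have e1 : ⟪a + Rv a b, a + Rv a b⟫ = ⟪a, a⟫ + ⟪b, b⟫ - 2 * ⟪a, b⟫ := by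
    simp only [inner_add_left, inner_add_right, hRbRb, hcRb, haRb]
    linarith [hkA, hcomm]
  have e2 : ⟪b + Rv b a, b + Rv b a⟫ = ⟪a, a⟫ + ⟪b, b⟫ - 2 * ⟪a, b⟫ := by
    simp only [inner_add_left, inner_add_right, hRaRa, hcRa, hbRa]
    linarith [hkB, hcomm]
  have f1 : ⟪W, a + Rv a b⟫ = ⟪W, a⟫ + (⟪W, b⟫ - 2 * ⟪b, a⟫ / ⟪a, a⟫ * ⟪W, a⟫) := by
    rw [inner_add_right, hWRb]
  have f2 : ⟪W, b + Rv b a⟫ = ⟪W, b⟫ + (⟪W, a⟫ - 2 * ⟪a, b⟫ / ⟪b, b⟫ * ⟪W, b⟫) := by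
    rw [inner_add_right, hWRa]
  rw [e1, f1] at h3'
  rw [e2, f2] at h4'
  -- multiply through by the positive quantities ⟪a,a⟫, ⟪b,b⟫
  have hkWa : 2 * ⟪b, a⟫ / ⟪a, a⟫ * ⟪W, a⟫ * ⟪a, a⟫ = 2 * ⟪b, a⟫ * ⟪W, a⟫ := by
    rw [mul_right_comm, hkA]
  have hkWb : 2 * ⟪a, b⟫ / ⟪b, b⟫ * ⟪W, b⟫ * ⟪b, b⟫ = 2 * ⟪a, b⟫ * ⟪W, b⟫ := by
    rw [mul_right_comm, hkB]
  have P1 : 2 * (⟪a, a⟫ * ⟪W, a⟫ + (⟪a, a⟫ * ⟪W, b⟫ - 2 * ⟪a, b⟫ * ⟪W, a⟫))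
      ≤ ⟪a, a⟫ * (⟪a, a⟫ + ⟪b, b⟫ - 2 * ⟪a, b⟫) := by
    have hmul := mul_le_mul_of_nonneg_left h3' hA.le
    have hcWa : ⟪b, a⟫ * ⟪W, a⟫ = ⟪a, b⟫ * ⟪W, a⟫ := by rw [hcomm]
    linarith [hmul, hkWa, hcWa]
  have P2 : 2 * (⟪b, b⟫ * ⟪W, b⟫ + (⟪b, b⟫ * ⟪W, a⟫ - 2 * ⟪a, b⟫ * ⟪W, b⟫))
      ≤ ⟪b, b⟫ * (⟪a, a⟫ + ⟪b, b⟫ - 2 * ⟪a, b⟫) := by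
    have hmul := mul_le_mul_of_nonneg_left h4' hB.le
    linarith [hmul, hkWb]
  -- conclude with the scalar lemma and Cauchy-Schwarz
  have hCS : ⟪a, b⟫ ≤ ‖a‖ * ‖b‖ := real_inner_le_norm a b
  obtain ⟨ht_eq, hnn⟩ := scalar_key hA hB hα hβ P1 P2 hCS
    (real_inner_self_eq_norm_mul_norm a) (real_inner_self_eq_norm_mul_norm b)
  have hkey : ‖b‖ • a = ‖a‖ • b := inner_eq_norm_mul_iff_real.mp ht_eq
  rw [hnn] at hkey
  have hbne' : ‖b‖ ≠ 0 := by simpa using hbne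
  have hab : a = b := smul_right_injective E2 hbne' hkey
  apply hcc'
  have := congrArg (· + xbar) (hadef ▸ hbdef ▸ hab)
  simpa [sub_add_cancel] using this
lemma one_sub_cos_le_sq (θ : ℝ) : 1 - Real.cos θ ≤ θ ^ 2 / 2 := by
  have h : Real.sin (θ / 2) ^ 2 = 1 / 2 - Real.cos θ / 2 := by
    have h0 := Real.sin_sq_eq_half_sub (θ / 2)
    rwa [show 2 * (θ / 2) = θ by ring] at h0
  have habs : |Real.sin (θ / 2)| ≤ |θ / 2| := Real.abs_sin_le_abs
  have hsq : Real.sin (θ / 2) ^ 2 ≤ (θ / 2) ^ 2 := by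
    rw [← sq_abs (Real.sin (θ / 2)), ← sq_abs (θ / 2)]
    exact pow_le_pow_left₀ (abs_nonneg _) habs 2
  nlinarith [h, hsq]

/-- Arc-length parametrization of the circle of radius `r` around `xbar`. -/
def circ (xbar : E2) (r : ℝ) (t : ℝ) : E2 :=
  xbar + (WithLp.equiv 2 (Fin 2 → ℝ)).symm ![r * Real.cos (t / r), r * Real.sin (t / r)]

lemma circ_lip (xbar : E2) (r : ℝ) (hr : 0 < r) : LipschitzWith 1 (circ xbar r) := by
  apply LipschitzWith.of_dist_le_mul
  intro s t
  rw [NNReal.coe_one, one_mul]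
  simp only [circ, dist_add_left]
  rw [EuclideanSpace.dist_eq]
  have hcoord : ∀ (u v : Fin 2 → ℝ) (i : Fin 2),
      dist ((WithLp.equiv 2 (Fin 2 → ℝ)).symm u i) ((WithLp.equiv 2 (Fin 2 → ℝ)).symm v i)
        = dist (u i) (v i) := fun u v i => rfl
  simp only [hcoord]
  rw [Fin.sum_univ_two]
  simp only [Matrix.cons_val_zero, Matrix.cons_val_one, Matrix.head_cons, Real.dist_eq]
  rw [sq_abs, sq_abs]
  set A := s / r
  set B := t / r
  have key : (r * Real.cos A - r * Real.cos B) ^ 2 + (r * Real.sin A - r * Real.sin B) ^ 2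
      ≤ (s - t) ^ 2 := by
    have h1 := Real.sin_sq_add_cos_sq A
    have h2 := Real.sin_sq_add_cos_sq B
    have h3 := Real.cos_sub A B
    have h4 := one_sub_cos_le_sq (A - B)
    have hAB : A - B = (s - t) / r := by rw [div_sub_div_same]
    have hAB2 : (A - B) ^ 2 * r ^ 2 = (s - t) ^ 2 := by
      rw [hAB, div_pow, div_mul_cancel₀ _ (by positivity : r ^ 2 ≠ 0)]
    nlinarith [mul_le_mul_of_nonneg_right h4 (sq_nonneg r), sq_nonneg r]
  calc Real.sqrt ((r * Real.cos A - r * Real.cos B) ^ 2 + (r * Real.sin A - r * Real.sin B) ^ 2)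
      ≤ Real.sqrt ((s - t) ^ 2) := Real.sqrt_le_sqrt key
    _ = |s - t| := Real.sqrt_sq_eq_abs _
    _ = dist s t := (Real.dist_eq s t).symm

lemma sphere_subset_circ (xbar : E2) (r : ℝ) (hr : 0 < r) :
    sphere xbar r ⊆ circ xbar r '' (Set.Icc (-(π * r)) (π * r)) := by
  intro p hp
  have hdist : dist p xbar = r := mem_sphere.mp hp
  set d : E2 := p - xbar with hd
  have hnorm : ‖d‖ = r := by rw [hd, ← dist_eq_norm]; exact hdist
  set z : ℂ := ⟨d 0, d 1⟩ with hz
  have habs : ‖z‖ = r := by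
    rw [Complex.norm_def, Complex.normSq_mk]
    rw [← hnorm, EuclideanSpace.norm_eq]
    congr 1
    rw [Fin.sum_univ_two, Real.norm_eq_abs, Real.norm_eq_abs, sq_abs, sq_abs]
    ring
  have hzne : z ≠ 0 := by
    intro h0
    rw [h0, norm_zero] at habs
    exact (ne_of_gt hr) habs.symm
  refine ⟨r * Complex.arg z, ⟨?_, ?_⟩, ?_⟩
  · have := Complex.neg_pi_lt_arg z
    nlinarith
  · have := Complex.arg_le_pi z
    nlinarith
  · have harg : r * Complex.arg z / r = Complex.arg z := by
      field_simp
    rw [circ, harg]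
    have hcos : r * Real.cos (Complex.arg z) = d 0 := by
      rw [Complex.cos_arg hzne, habs]
      field_simp [hz]
      rfl
    have hsin : r * Real.sin (Complex.arg z) = d 1 := by
      rw [Complex.sin_arg, habs]
      field_simp [hz]
      rfl
    rw [hcos, hsin]
    have hvec : (WithLp.equiv 2 (Fin 2 → ℝ)).symm ![d 0, d 1] = d := by
      ext i
      fin_cases i <;> rfl
    rw [hvec, hd]
    abel

lemma sphere_hausdorff_le (xbar : E2) (r : ℝ) (hr : 0 < r) :
    μH[1] (sphere xbar r) ≤ ENNReal.ofReal (2 * π * r) := by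
  have h1 : μH[1] (sphere xbar r) ≤ μH[1] (circ xbar r '' (Set.Icc (-(π * r)) (π * r))) :=
    measure_mono (sphere_subset_circ xbar r hr)
  have h2 := (circ_lip xbar r hr).hausdorffMeasure_image_le zero_le_one
    (Set.Icc (-(π * r)) (π * r))
  simp only [ENNReal.coe_one, ENNReal.one_rpow, one_mul] at h2
  have h3 : μH[1] (Set.Icc (-(π * r)) (π * r)) = ENNReal.ofReal (2 * π * r) := by
    rw [MeasureTheory.hausdorffMeasure_real, Real.volume_Icc]
    congr 1
    ring
  exact h1.trans (h2.trans h3.le)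
theorem boundary_union_balls_bound (xbar : E2) (r : ℝ) (hr : 0 < r)
    (n : ℕ) (x : Fin n → E2) :
    μH[1] (ball xbar r ∩ frontier (⋃ i, ball (x i) r)) ≤
      μH[1] (sphere xbar r ∩ ⋃ i, ball (x i) r) ∧
    μH[1] (sphere xbar r ∩ ⋃ i, ball (x i) r) ≤ ENNReal.ofReal (2 * π * r) := by
  classical
  set U : Set E2 := ⋃ i, ball (x i) r with hU
  have hUopen : IsOpen U := isOpen_iUnion fun i => isOpen_ball
  set K : Finset E2 := Finset.image x Finset.univ with hK
  have hballs : ∀ c ∈ K, ball c r ⊆ U := by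
    intro c hc
    obtain ⟨i, _, rfl⟩ := Finset.mem_image.mp hc
    exact Set.subset_iUnion (fun j => ball (x j) r) i
  set D : E2 → Set E2 := fun c => (sphere c r ∩ ball xbar r) \ U with hD
  have hDmeas : ∀ c, MeasurableSet (D c) := fun c =>
    ((isClosed_sphere.measurableSet.inter measurableSet_ball)).diff hUopen.measurableSet
  -- the frontier inside the ball is covered by the sets D c
  have hcover : ball xbar r ∩ frontier U ⊆ ⋃ c ∈ K, D c := by
    rintro z ⟨hzball, hzfr⟩
    rw [hUopen.frontier_eq] at hzfr
    obtain ⟨hzcl, hzU⟩ := hzfr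
    have hsub : closure U ⊆ ⋃ i, closedBall (x i) r := by
      rw [hU, closure_iUnion_of_finite]
      exact Set.iUnion_mono fun i => by rw [closure_ball _ (ne_of_gt hr)]
    obtain ⟨i, hi⟩ := Set.mem_iUnion.mp (hsub hzcl)
    refine Set.mem_biUnion (Finset.mem_image_of_mem x (Finset.mem_univ i)) ?_
    have hnotball : z ∉ ball (x i) r := fun h => hzU (Set.mem_iUnion.mpr ⟨i, h⟩)
    have hle : dist z (x i) ≤ r := mem_closedBall.mp hi
    have hsphere : z ∈ sphere (x i) r :=
      mem_sphere.mpr (le_antisymm hle (not_lt.mp fun h => hnotball (mem_ball.mpr h)))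
    exact ⟨⟨hsphere, hzball⟩, hzU⟩
  have step1 : μH[1] (ball xbar r ∩ frontier U) ≤ ∑ c ∈ K, μH[1] (D c) :=
    (measure_mono hcover).trans (measure_biUnion_finset_le K D)
  -- basic distance facts about points in the images
  have himg : ∀ c, ∀ w ∈ tau xbar c '' D c,
      dist w xbar = r ∧ dist w c < r ∧ ∀ c' ∈ K, r ≤ dist w (tau xbar c c') := by
    rintro c w ⟨z, ⟨⟨hzs, hzb⟩, hzU⟩, rfl⟩
    refine ⟨?_, ?_, ?_⟩
    · have h := tau_dist xbar c z c
      rw [tau_center] at h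
      rw [h]; exact mem_sphere.mp hzs
    · have h := tau_dist xbar c z xbar
      rw [tau_base] at h
      rw [h]; exact mem_ball.mp hzb
    · intro c' hc'
      have h := tau_dist xbar c z c'
      rw [h]
      have : z ∉ ball c' r := fun hmem => hzU (hballs c' hc' hmem)
      exact not_lt.mp (fun hlt => this (mem_ball.mpr hlt))
  -- the images are pairwise disjoint
  have hdisj : Set.PairwiseDisjoint (↑K : Set E2) (fun c => tau xbar c '' D c) := by
    intro c hc c' hc' hne
    rw [Function.onFun, Set.disjoint_left]
    intro w hw hw'
    obtain ⟨hws, hwc, hout⟩ := himg c w hw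
    obtain ⟨-, hwc', hout'⟩ := himg c' w hw'
    exact key_geom xbar c c' w r hne hws hwc hwc'
      (hout c' (Finset.mem_coe.mp hc')) (hout' c (Finset.mem_coe.mp hc))
  have himeas : ∀ c ∈ K, MeasurableSet (tau xbar c '' D c) := by
    intro c _
    rw [tau_image_eq_preimage]
    exact (tau_cont xbar c).measurable (hDmeas c)
  -- the images sit inside the covered part of the sphere
  have himsub : ∀ c ∈ K, tau xbar c '' D c ⊆ sphere xbar r ∩ U := by
    intro c hc w hw
    obtain ⟨hws, hwc, -⟩ := himg c w hw
    exact ⟨mem_sphere.mpr hws, hballs c hc (mem_ball.mpr hwc)⟩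
  have step2 : ∑ c ∈ K, μH[1] (D c) = μH[1] (⋃ c ∈ K, tau xbar c '' D c) := by
    rw [measure_biUnion_finset hdisj himeas]
    exact Finset.sum_congr rfl fun c _ =>
      ((tau_isometry xbar c).hausdorffMeasure_image (Or.inl zero_le_one) (D c)).symm
  have step3 : μH[1] (⋃ c ∈ K, tau xbar c '' D c) ≤ μH[1] (sphere xbar r ∩ U) :=
    measure_mono (Set.iUnion₂_subset himsub)
  constructor
  · calc μH[1] (ball xbar r ∩ frontier U) ≤ ∑ c ∈ K, μH[1] (D c) := step1
      _ = μH[1] (⋃ c ∈ K, tau xbar c '' D c) := step2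
      _ ≤ μH[1] (sphere xbar r ∩ U) := step3
  · exact (measure_mono Set.inter_subset_left).trans (sphere_hausdorff_le xbar r hr)
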